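/- arXiv:2503.05970 — 4 statements merged into one kernel-verified Lean document; each statement's English description precedes it below -/
import Mathlib

section
/- Fix u ∈ (0,1) and N agents. For each agent i = 1,…,N let K_i ≥ 1 be an integer and λ_i > 0. On a probability space, let e_{i,0} be square-integrable random variables that are independent across agents, and let {ξ^{(n)}_{i,t} : 1 ≤ n ≤ K_i, t ≥ 1} be random variables, mutually independent and independent of the initial errors, each with mean 0 and variance at most λ_i². Define recursively e_{i,t} = u·e_{i,t−1} + (1−u)·(1/K_i)·Σ_{n=1}^{K_i} ξ^{(n)}_{i,t}. Then for every t ≥ 0, Var(Σ_{i=1}^N e_{i,t}) ≤ Σ_{i=1}^N ( u^{2t}·Var(e_{i,0}) + ((1−u)/(1+u))·λ_i²/K_i ). -/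
open MeasureTheory ProbabilityTheory Filter

lemma closed_form {Ω : Type*} (u Kr : ℝ) (e : ℕ → Ω → ℝ) (g : ℕ → Ω → ℝ)
    (hrec : ∀ t ω, e (t + 1) ω = u * e t ω + (1 - u) * (1 / Kr) * g (t + 1) ω) :
    ∀ t ω, e t ω = u ^ t * e 0 ω
      + ∑ s ∈ Finset.range t, ((1 - u) * u ^ s / Kr) * g (t - s) ω := by
  intro t
  induction t with
  | zero => intro ω; simp
  | succ t IH =>
    intro ω
    rw [hrec, IH]
    rw [Finset.sum_range_succ' (fun s => ((1 - u) * u ^ s / Kr) * g (t + 1 - s) ω)]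
    simp only [Nat.succ_sub_succ_eq_sub, pow_zero, Nat.sub_zero]
    rw [mul_add, Finset.mul_sum]
    have h1 : ∀ s ∈ Finset.range t,
        u * (((1 - u) * u ^ s / Kr) * g (t - s) ω)
          = ((1 - u) * u ^ (s + 1) / Kr) * g (t - s) ω := by
      intro s _; ring
    rw [Finset.sum_congr rfl h1]
    ring

/-- index type for the base random variables appearing in `e i t`. -/
abbrev MIdx (N : ℕ) (K : Fin N → ℕ) (t : ℕ) :=
  Fin N ⊕ ((Σ i : Fin N, Fin (K i)) × Fin t)

/-- embedding of the local index type into the global one. -/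
def embW (N : ℕ) (K : Fin N → ℕ) (t : ℕ) :
    MIdx N K t → (Fin N ⊕ Σ i : Fin N, Fin (K i) × ℕ)
  | Sum.inl i => Sum.inl i
  | Sum.inr (⟨i, n⟩, s) => Sum.inr ⟨i, (n, t - s)⟩

lemma embW_inj (N : ℕ) (K : Fin N → ℕ) (t : ℕ) : Function.Injective (embW N K t) := by
  rintro (i | ⟨⟨i, n⟩, s⟩) (j | ⟨⟨j, m⟩, r⟩) h <;>
    simp only [embW, Sum.inl.injEq, Sum.inr.injEq, reduceCtorEq] at h
  · exact congrArg Sum.inl h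
  · obtain ⟨rfl, h2⟩ := Sigma.mk.inj_iff.1 h
    rw [heq_iff_eq, Prod.mk.injEq] at h2
    obtain ⟨rfl, h3⟩ := h2
    have hsr : (s : ℕ) = (r : ℕ) := by
      have hs := s.isLt; have hr := r.isLt; omega
    exact congrArg Sum.inr (by rw [Fin.ext hsr])

/-- Proposition 1 instance: variance bound for the joint ensemble
Q-function error in uncoordinated states. -/
theorem mmemq_variance_bound
    {Ω : Type*} [MeasurableSpace Ω] (μ : Measure Ω) [IsProbabilityMeasure μ]
    (N : ℕ) (u : ℝ) (hu : u ∈ Set.Ioo (0 : ℝ) 1)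
    (K : Fin N → ℕ) (hK : ∀ i, 1 ≤ K i)
    (lam : Fin N → ℝ) (hlam : ∀ i, 0 < lam i)
    (e : Fin N → ℕ → Ω → ℝ)
    (ξ : (i : Fin N) → Fin (K i) → ℕ → Ω → ℝ)
    (he0 : ∀ i, MemLp (e i 0) 2 μ)
    (hξint : ∀ i n t, MemLp (ξ i n t) 2 μ)
    (hindep : iIndepFun
      (Sum.elim (fun i : Fin N => e i 0)
        (fun p : Σ i : Fin N, Fin (K i) × ℕ => ξ p.1 p.2.1 p.2.2)) μ)
    (hmean : ∀ i n t, ∫ ω, ξ i n t ω ∂μ = 0)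
    (hvar : ∀ i n t, variance (ξ i n t) μ ≤ (lam i) ^ 2)
    (hrec : ∀ i t ω, e i (t + 1) ω
      = u * e i t ω + (1 - u) * (1 / (K i : ℝ)) * ∑ n, ξ i n (t + 1) ω) :
    ∀ t : ℕ, variance (fun ω => ∑ i, e i t ω) μ
      ≤ ∑ i, (u ^ (2 * t) * variance (e i 0) μ
          + ((1 - u) / (1 + u)) * (lam i) ^ 2 / (K i : ℝ)) := by
  obtain ⟨hu0, hu1⟩ := hu
  intro t
  classical
  set F : (Fin N ⊕ Σ i : Fin N, Fin (K i) × ℕ) → Ω → ℝ :=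
    Sum.elim (fun i : Fin N => e i 0)
      (fun p : Σ i : Fin N, Fin (K i) × ℕ => ξ p.1 p.2.1 p.2.2) with hF
  -- the family of scaled base variables
  set W : MIdx N K t → Ω → ℝ :=
    Sum.elim (fun i => fun ω => u ^ t * e i 0 ω)
      (fun p => fun ω =>
        ((1 - u) * u ^ (p.2 : ℕ) / (K p.1.1 : ℝ)) * ξ p.1.1 p.1.2 (t - p.2) ω)
      with hWdef
  have hWl : ∀ i, W (Sum.inl i) = fun ω => u ^ t * e i 0 ω := fun i => rfl
  have hWr : ∀ (i : Fin N) (n : Fin (K i)) (s : Fin t),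
      W (Sum.inr (⟨i, n⟩, s))
        = fun ω => ((1 - u) * u ^ (s : ℕ) / (K i : ℝ)) * ξ i n (t - s) ω :=
    fun i n s => rfl
  -- closed form for each agent
  have hcf : ∀ i ω, e i t ω = u ^ t * e i 0 ω
      + ∑ s ∈ Finset.range t, ((1 - u) * u ^ s / (K i : ℝ))
          * (∑ n, ξ i n (t - s) ω) := by
    intro i
    exact closed_form u (K i : ℝ) (e i) (fun s ω => ∑ n, ξ i n s ω) (hrec i) t
  -- rewrite the total error as a finite sum of the independent family W
  have hsum : ∀ ω, ∑ i, e i t ω = ∑ j : MIdx N K t, W j ω := by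
    intro ω
    rw [Fintype.sum_sum_type]
    have h2 : ∑ p : (Σ i : Fin N, Fin (K i)) × Fin t, W (Sum.inr p) ω
        = ∑ i, ∑ s ∈ Finset.range t,
            ((1 - u) * u ^ s / (K i : ℝ)) * (∑ n, ξ i n (t - s) ω) := by
      rw [Fintype.sum_prod_type, ← Finset.univ_sigma_univ, Finset.sum_sigma]
      refine Finset.sum_congr rfl fun i _ => ?_
      rw [Finset.sum_comm]
      rw [← Fin.sum_univ_eq_sum_range
        (fun s => ((1 - u) * u ^ s / (K i : ℝ)) * (∑ n, ξ i n (t - s) ω))]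
      refine Finset.sum_congr rfl fun s _ => ?_
      rw [Finset.mul_sum]
      rfl
    rw [h2]
    rw [← Finset.sum_add_distrib]
    refine Finset.sum_congr rfl fun i _ => ?_
    rw [hWl i]
    exact hcf i ω
  have hvareq : variance (fun ω => ∑ i, e i t ω) μ
      = ∑ j : MIdx N K t, variance (W j) μ := by
    have hfun : (fun ω => ∑ i, e i t ω) = ∑ j : MIdx N K t, W j := by
      funext ω; rw [hsum ω]; simp [Finset.sum_apply]
    rw [hfun]
    refine IndepFun.variance_sum (fun j _ => ?_) (fun j _ j' _ hjj' => ?_)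
    · rcases j with i | ⟨⟨i, n⟩, s⟩
      · exact (he0 i).const_mul (u ^ t)
      · exact (hξint i n (t - s)).const_mul ((1 - u) * u ^ (s : ℕ) / (K i : ℝ))
    · have hbase : IndepFun (F (embW N K t j)) (F (embW N K t j')) μ :=
        hindep.indepFun (fun h => hjj' (embW_inj N K t h))
      have hcomp : ∀ j : MIdx N K t, ∃ c : ℝ,
          W j = (fun x => c * x) ∘ F (embW N K t j) := by
        rintro (i | ⟨⟨i, n⟩, s⟩)
        · exact ⟨u ^ t, rfl⟩
        · exact ⟨(1 - u) * u ^ (s : ℕ) / (K i : ℝ), rfl⟩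
      obtain ⟨c, hc⟩ := hcomp j
      obtain ⟨c', hc'⟩ := hcomp j'
      show IndepFun (W j) (W j') μ
      rw [hc, hc']
      exact hbase.comp (measurable_const_mul c) (measurable_const_mul c')
  rw [hvareq, Fintype.sum_sum_type]
  -- geometric sum bound
  have hgeom : ∑ s ∈ Finset.range t, (u ^ 2) ^ s ≤ 1 / (1 - u ^ 2) := by
    have hu2 : u ^ 2 < 1 := by nlinarith
    have hne : u ^ 2 ≠ 1 := by nlinarith
    have hkey : ((u ^ 2) ^ t - 1) / (u ^ 2 - 1) = (1 - (u ^ 2) ^ t) / (1 - u ^ 2) := by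
      rw [← neg_sub 1 ((u ^ 2) ^ t), ← neg_sub 1 (u ^ 2), neg_div_neg_eq]
    rw [geom_sum_eq hne, hkey, div_le_div_iff₀ (by nlinarith) (by nlinarith)]
    have hpt : (0:ℝ) ≤ (u ^ 2) ^ t := by positivity
    nlinarith
  have hpart1 : ∑ i : Fin N, variance (W (Sum.inl i)) μ
      = ∑ i, u ^ (2 * t) * variance (e i 0) μ := by
    refine Finset.sum_congr rfl fun i _ => ?_
    rw [hWl i, variance_const_mul (u ^ t) (e i 0) μ, ← pow_mul, mul_comm t 2]
  have hpart2 : ∑ p : (Σ i : Fin N, Fin (K i)) × Fin t, variance (W (Sum.inr p)) μ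
      ≤ ∑ i, ((1 - u) / (1 + u)) * (lam i) ^ 2 / (K i : ℝ) := by
    rw [Fintype.sum_prod_type, ← Finset.univ_sigma_univ, Finset.sum_sigma]
    refine Finset.sum_le_sum fun i _ => ?_
    have hKpos : (0:ℝ) < (K i : ℝ) := by exact_mod_cast hK i
    have hstep : ∀ n : Fin (K i), ∑ s : Fin t, variance (W (Sum.inr (⟨i, n⟩, s))) μ
        ≤ ((1 - u) ^ 2 / (K i : ℝ) ^ 2) * (lam i) ^ 2 * (1 / (1 - u ^ 2)) := by
      intro n
      have hb : ∀ s : Fin t, variance (W (Sum.inr (⟨i, n⟩, s))) μ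
          ≤ ((1 - u) ^ 2 / (K i : ℝ) ^ 2) * (lam i) ^ 2 * (u ^ 2) ^ (s : ℕ) := by
        intro s
        rw [hWr i n s, variance_const_mul ((1 - u) * u ^ (s : ℕ) / (K i : ℝ)) _ μ]
        have h1 : ((1 - u) * u ^ (s : ℕ) / (K i : ℝ)) ^ 2
            = ((1 - u) ^ 2 / (K i : ℝ) ^ 2) * (u ^ 2) ^ (s : ℕ) := by
          field_simp
          ring
        rw [h1]
        have hv := hvar i n (t - s)
        have hc : (0:ℝ) ≤ ((1 - u) ^ 2 / (K i : ℝ) ^ 2) * (u ^ 2) ^ (s : ℕ) := by positivity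
        calc ((1 - u) ^ 2 / (K i : ℝ) ^ 2) * (u ^ 2) ^ (s:ℕ) * variance (ξ i n (t - s)) μ
            ≤ ((1 - u) ^ 2 / (K i : ℝ) ^ 2) * (u ^ 2) ^ (s:ℕ) * (lam i) ^ 2 :=
              mul_le_mul_of_nonneg_left hv hc
          _ = ((1 - u) ^ 2 / (K i : ℝ) ^ 2) * (lam i) ^ 2 * (u ^ 2) ^ (s:ℕ) := by ring
      calc ∑ s : Fin t, variance (W (Sum.inr (⟨i, n⟩, s))) μ
          ≤ ∑ s : Fin t, ((1 - u) ^ 2 / (K i : ℝ) ^ 2) * (lam i) ^ 2 * (u ^ 2) ^ (s:ℕ) :=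
            Finset.sum_le_sum fun s _ => hb s
        _ = ((1 - u) ^ 2 / (K i : ℝ) ^ 2) * (lam i) ^ 2 * ∑ s ∈ Finset.range t, (u ^ 2) ^ s := by
            rw [← Finset.mul_sum, Fin.sum_univ_eq_sum_range]
        _ ≤ ((1 - u) ^ 2 / (K i : ℝ) ^ 2) * (lam i) ^ 2 * (1 / (1 - u ^ 2)) :=
            mul_le_mul_of_nonneg_left hgeom (by positivity)
    calc ∑ n : Fin (K i), ∑ s : Fin t, variance (W (Sum.inr (⟨i, n⟩, s))) μ
        ≤ ∑ _n : Fin (K i), ((1 - u) ^ 2 / (K i : ℝ) ^ 2) * (lam i) ^ 2 * (1 / (1 - u ^ 2)) :=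
          Finset.sum_le_sum fun n _ => hstep n
      _ = (K i : ℝ) * (((1 - u) ^ 2 / (K i : ℝ) ^ 2) * (lam i) ^ 2 * (1 / (1 - u ^ 2))) := by
          rw [Finset.sum_const, Finset.card_univ, Fintype.card_fin, nsmul_eq_mul]
      _ = ((1 - u) / (1 + u)) * (lam i) ^ 2 / (K i : ℝ) := by
          have h12 : 1 - u ^ 2 = (1 - u) * (1 + u) := by ring
          have hne1 : (1:ℝ) - u ≠ 0 := by linarith
          have hne2 : (1:ℝ) + u ≠ 0 := by linarith
          have hneK : (K i : ℝ) ≠ 0 := ne_of_gt hKpos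
          rw [h12]
          field_simp
  calc ∑ i : Fin N, variance (W (Sum.inl i)) μ
        + ∑ p : (Σ i : Fin N, Fin (K i)) × Fin t, variance (W (Sum.inr p)) μ
      ≤ ∑ i, u ^ (2 * t) * variance (e i 0) μ
        + ∑ i, ((1 - u) / (1 + u)) * (lam i) ^ 2 / (K i : ℝ) := by
        rw [hpart1]; exact add_le_add_right hpart2 _
    _ = ∑ i, (u ^ (2 * t) * variance (e i 0) μ
        + ((1 - u) / (1 + u)) * (lam i) ^ 2 / (K i : ℝ)) := by
        rw [Finset.sum_add_distrib]
end

section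
/- Let u_t ∈ [0,1) (t ≥ 1) satisfy u_t → 1 and Σ_{t≥1} (1−u_t) = ∞. For each agent i = 1,…,N let e_{i,0} be a real constant and let η_{i,t} (t ≥ 1) be random variables, mutually independent across all i and t, each with mean 0 and variance at most λ_i². Define e_{i,t} = u_t·e_{i,t−1} + (1−u_t)·η_{i,t}. Then E[(Σ_{i=1}^N e_{i,t})²] → 0 as t → ∞, i.e., Σ_{i=1}^N e_{i,t} converges to 0 in mean square. -/
open MeasureTheory ProbabilityTheory Filter

namespace MMEMQaux

/-- tail product of update ratios -/
noncomputable def Q (u : ℕ → ℝ) (m t : ℕ) : ℝ := ∏ r ∈ Finset.Ioc m t, u r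

lemma Q_nonneg {u : ℕ → ℝ} (hu01 : ∀ t, 1 ≤ t → u t ∈ Set.Ico (0:ℝ) 1) (m t : ℕ) :
    0 ≤ Q u m t :=
  Finset.prod_nonneg fun r hr => (hu01 r (by have := (Finset.mem_Ioc.1 hr).1; omega)).1

lemma Q_le_one {u : ℕ → ℝ} (hu01 : ∀ t, 1 ≤ t → u t ∈ Set.Ico (0:ℝ) 1) (m t : ℕ) :
    Q u m t ≤ 1 :=
  Finset.prod_le_one
    (fun r hr => (hu01 r (by have := (Finset.mem_Ioc.1 hr).1; omega)).1)
    (fun r hr => le_of_lt (hu01 r (by have := (Finset.mem_Ioc.1 hr).1; omega)).2)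

lemma Q_split {u : ℕ → ℝ} {s m t : ℕ} (hsm : s ≤ m) (hmt : m ≤ t) :
    Q u s t = Q u s m * Q u m t :=
  (Finset.prod_Ioc_consecutive _ hsm hmt).symm

lemma Q_tendsto {u : ℕ → ℝ} (hu01 : ∀ t, 1 ≤ t → u t ∈ Set.Ico (0:ℝ) 1)
    (hdiv : Tendsto (fun T => ∑ t ∈ Finset.Icc 1 T, (1 - u t)) atTop atTop) (m : ℕ) :
    Tendsto (fun t => Q u m t) atTop (nhds 0) := by
  have hdiv' : Tendsto (fun T => ∑ t ∈ Finset.Ioc 0 T, (1 - u t)) atTop atTop := by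
    have : ∀ T, Finset.Icc 1 T = Finset.Ioc 0 T := fun T => Finset.Icc_add_one_left_eq_Ioc 0 T
    simpa [this] using hdiv
  have htail : Tendsto (fun t => ∑ r ∈ Finset.Ioc m t, (1 - u r)) atTop atTop := by
    have h1 : Tendsto (fun t => (∑ r ∈ Finset.Ioc 0 t, (1 - u r))
        + (-(∑ r ∈ Finset.Ioc 0 m, (1 - u r)))) atTop atTop :=
      tendsto_atTop_add_const_right _ _ hdiv'
    refine h1.congr' ?_
    filter_upwards [eventually_ge_atTop m] with t ht
    have := Finset.sum_Ioc_consecutive (fun r => (1 - u r)) (Nat.zero_le m) ht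
    linarith
  have hg : Tendsto (fun t => Real.exp (-(∑ r ∈ Finset.Ioc m t, (1 - u r)))) atTop (nhds 0) :=
    Real.tendsto_exp_atBot.comp (tendsto_neg_atTop_atBot.comp htail)
  refine squeeze_zero (fun t => Q_nonneg hu01 m t) (fun t => ?_) hg
  have h1 : Q u m t ≤ ∏ r ∈ Finset.Ioc m t, Real.exp (u r - 1) := by
    refine Finset.prod_le_prod
      (fun r hr => (hu01 r (by have := (Finset.mem_Ioc.1 hr).1; omega)).1)
      (fun r hr => ?_)
    have := Real.add_one_le_exp (u r - 1)
    linarith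
  have h2 : ∏ r ∈ Finset.Ioc m t, Real.exp (u r - 1)
      = Real.exp (-(∑ r ∈ Finset.Ioc m t, (1 - u r))) := by
    rw [← Real.exp_sum]
    congr 1
    rw [← Finset.sum_neg_distrib]
    exact Finset.sum_congr rfl fun r _ => by ring
  rw [h2] at h1
  exact h1

lemma telescope (u : ℕ → ℝ) {a t : ℕ} (hat : a ≤ t) :
    ∑ s ∈ Finset.Ioc a t, (1 - u s) * Q u s t = 1 - Q u a t := by
  induction t with
  | zero =>
    have : a = 0 := Nat.le_zero.1 hat
    subst this
    simp [Q]
  | succ t ih =>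
    rcases Nat.lt_or_ge a (t + 1) with h | h
    · have hat' : a ≤ t := by omega
      rw [Finset.sum_Ioc_succ_top hat']
      have h2 : Q u (t+1) (t+1) = 1 := by simp [Q]
      have h3 : ∀ s ∈ Finset.Ioc a t, (1 - u s) * Q u s (t+1)
          = u (t+1) * ((1 - u s) * Q u s t) := by
        intro s hs
        have : Q u s (t+1) = Q u s t * u (t+1) :=
          Finset.prod_Ioc_succ_top (Finset.mem_Ioc.1 hs).2 u
        rw [this]; ring
      rw [Finset.sum_congr rfl h3, ← Finset.mul_sum, ih hat', h2,
        show Q u a (t+1) = Q u a t * u (t+1) from Finset.prod_Ioc_succ_top hat' u]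
      ring
    · have : a = t + 1 := le_antisymm hat h
      subst this
      simp [Q]

lemma W_tendsto {u : ℕ → ℝ} (hu01 : ∀ t, 1 ≤ t → u t ∈ Set.Ico (0:ℝ) 1)
    (hu1 : Tendsto u atTop (nhds 1))
    (hdiv : Tendsto (fun T => ∑ t ∈ Finset.Icc 1 T, (1 - u t)) atTop atTop) :
    Tendsto (fun t => ∑ s ∈ Finset.Ioc 0 t, ((1 - u s) * Q u s t) ^ 2) atTop (nhds 0) := by
  have wnn : ∀ s t, 1 ≤ s → 0 ≤ (1 - u s) * Q u s t := fun s t hs =>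
    mul_nonneg (by have := (hu01 s hs).2; linarith) (Q_nonneg hu01 s t)
  rw [Metric.tendsto_atTop]
  intro ε hε
  obtain ⟨m, hm⟩ := Metric.tendsto_atTop.1 hu1 (ε/2) (by positivity)
  have hQ : Tendsto (fun t => (m : ℝ) * Q u m t ^ 2) atTop (nhds 0) := by
    have := ((Q_tendsto hu01 hdiv m).pow 2).const_mul (m : ℝ)
    simpa using this
  obtain ⟨T, hT⟩ := eventually_atTop.1 (hQ.eventually_lt_const (by positivity : (0:ℝ) < ε/2))
  refine ⟨max m T, fun t ht => ?_⟩
  have hmt : m ≤ t := le_trans (le_max_left _ _) ht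
  have hWnn : (0:ℝ) ≤ ∑ s ∈ Finset.Ioc 0 t, ((1 - u s) * Q u s t) ^ 2 :=
    Finset.sum_nonneg fun s _ => sq_nonneg _
  rw [Real.dist_eq, sub_zero, abs_of_nonneg hWnn]
  have hsplit : ∑ s ∈ Finset.Ioc 0 t, ((1 - u s) * Q u s t) ^ 2
      = (∑ s ∈ Finset.Ioc 0 m, ((1 - u s) * Q u s t) ^ 2)
        + ∑ s ∈ Finset.Ioc m t, ((1 - u s) * Q u s t) ^ 2 :=
    (Finset.sum_Ioc_consecutive _ (Nat.zero_le m) hmt).symm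
  have hb1 : ∑ s ∈ Finset.Ioc 0 m, ((1 - u s) * Q u s t) ^ 2 < ε/2 := by
    have hle : ∀ s ∈ Finset.Ioc 0 m, ((1 - u s) * Q u s t) ^ 2 ≤ Q u m t ^ 2 := by
      intro s hs
      obtain ⟨hs1, hs2⟩ := Finset.mem_Ioc.1 hs
      have hw : (1 - u s) * Q u s t ≤ Q u m t := by
        rw [Q_split hs2 hmt]
        have h1 : 1 - u s ≤ 1 := by have := (hu01 s hs1).1; linarith
        have h2 : Q u s m ≤ 1 := Q_le_one hu01 s m
        have h3 : 0 ≤ Q u m t := Q_nonneg hu01 m t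
        have h4 : 0 ≤ Q u s m := Q_nonneg hu01 s m
        calc (1 - u s) * (Q u s m * Q u m t) ≤ 1 * (Q u s m * Q u m t) :=
              mul_le_mul_of_nonneg_right h1 (mul_nonneg h4 h3)
          _ = Q u s m * Q u m t := one_mul _
          _ ≤ 1 * Q u m t := mul_le_mul_of_nonneg_right h2 h3
          _ = Q u m t := one_mul _
      exact pow_le_pow_left₀ (wnn s t hs1) hw 2
    calc ∑ s ∈ Finset.Ioc 0 m, ((1 - u s) * Q u s t) ^ 2
        ≤ ∑ _s ∈ Finset.Ioc 0 m, Q u m t ^ 2 := Finset.sum_le_sum hle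
      _ = (m : ℝ) * Q u m t ^ 2 := by simp [Nat.card_Ioc]
      _ < ε/2 := hT t (le_trans (le_max_right _ _) ht)
  have hb2 : ∑ s ∈ Finset.Ioc m t, ((1 - u s) * Q u s t) ^ 2 ≤ ε/2 := by
    have hle : ∀ s ∈ Finset.Ioc m t, ((1 - u s) * Q u s t) ^ 2
        ≤ (ε/2) * ((1 - u s) * Q u s t) := by
      intro s hs
      obtain ⟨hs1, hs2⟩ := Finset.mem_Ioc.1 hs
      have hs1' : 1 ≤ s := by omega
      have hwle : (1 - u s) * Q u s t ≤ ε/2 := by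
        have h1 : 1 - u s < ε/2 := by
          have := hm s (by omega)
          rw [Real.dist_eq] at this
          have := abs_lt.1 this
          linarith [this.1]
        have h2 : Q u s t ≤ 1 := Q_le_one hu01 s t
        have h3 : 0 ≤ Q u s t := Q_nonneg hu01 s t
        nlinarith [wnn s t hs1']
      rw [sq]
      exact mul_le_mul_of_nonneg_right hwle (wnn s t hs1')
    calc ∑ s ∈ Finset.Ioc m t, ((1 - u s) * Q u s t) ^ 2
        ≤ ∑ s ∈ Finset.Ioc m t, (ε/2) * ((1 - u s) * Q u s t) := Finset.sum_le_sum hle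
      _ = (ε/2) * ∑ s ∈ Finset.Ioc m t, (1 - u s) * Q u s t := by rw [Finset.mul_sum]
      _ = (ε/2) * (1 - Q u m t) := by rw [telescope u hmt]
      _ ≤ (ε/2) * 1 := by
          have := Q_nonneg hu01 m t
          have : 1 - Q u m t ≤ 1 := by linarith
          nlinarith
      _ = ε/2 := mul_one _
  rw [hsplit]
  linarith

end MMEMQaux

open MMEMQaux

/-- Corollary 2: mean-square convergence of the joint error to 0
with time-varying update ratio u_t → 1, Σ (1 - u_t) = ∞. -/
theorem mmemq_mean_square_convergence
    {Ω : Type*} [MeasurableSpace Ω] (μ : Measure Ω) [IsProbabilityMeasure μ]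
    (N : ℕ) (u : ℕ → ℝ)
    (hu01 : ∀ t, 1 ≤ t → u t ∈ Set.Ico (0 : ℝ) 1)
    (hu1 : Tendsto u atTop (nhds 1))
    (hdiv : Tendsto (fun T => ∑ t ∈ Finset.Icc 1 T, (1 - u t)) atTop atTop)
    (lam : Fin N → ℝ)
    (c : Fin N → ℝ)
    (e : Fin N → ℕ → Ω → ℝ)
    (η : Fin N → ℕ → Ω → ℝ)
    (he0 : ∀ i ω, e i 0 ω = c i)
    (hηint : ∀ i t, MemLp (η i t) 2 μ)
    (hindep : iIndepFun (fun p : Fin N × ℕ => η p.1 p.2) μ)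
    (hmean : ∀ i t, ∫ ω, η i t ω ∂μ = 0)
    (hvar : ∀ i t, variance (η i t) μ ≤ (lam i) ^ 2)
    (hrec : ∀ i t ω, e i (t + 1) ω
      = u (t + 1) * e i t ω + (1 - u (t + 1)) * η i (t + 1) ω) :
    Tendsto (fun t => ∫ ω, (∑ i, e i t ω) ^ 2 ∂μ) atTop (nhds 0) := by
  classical
  -- closed form for the error
  have hclosed : ∀ (t : ℕ) (i : Fin N) (ω : Ω), e i t ω
      = Q u 0 t * c i + ∑ s ∈ Finset.Ioc 0 t, ((1 - u s) * Q u s t) * η i s ω := by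
    intro t
    induction t with
    | zero => intro i ω; simp [Q, he0]
    | succ t ih =>
      intro i ω
      rw [hrec, ih]
      have h1 : Q u 0 (t+1) = Q u 0 t * u (t+1) := Finset.prod_Ioc_succ_top (Nat.zero_le t) u
      have h2 : Q u (t+1) (t+1) = 1 := by simp [Q]
      have h3 : ∀ s ∈ Finset.Ioc 0 t, ((1 - u s) * Q u s (t+1)) * η i s ω
          = u (t+1) * (((1 - u s) * Q u s t) * η i s ω) := by
        intro s hs
        have : Q u s (t+1) = Q u s t * u (t+1) :=
          Finset.prod_Ioc_succ_top (Finset.mem_Ioc.1 hs).2 u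
        rw [this]; ring
      rw [Finset.sum_Ioc_succ_top (Nat.zero_le t), Finset.sum_congr rfl h3,
        ← Finset.mul_sum, h1, h2]
      ring
  set Λ : ℝ := ∑ i, lam i ^ 2 with hΛ
  -- per time-step bound on the second moment
  have key : ∀ t, ∫ ω, (∑ i, e i t ω) ^ 2 ∂μ
      ≤ (Q u 0 t * ∑ i, c i) ^ 2 + Λ * ∑ s ∈ Finset.Ioc 0 t, ((1 - u s) * Q u s t) ^ 2 := by
    intro t
    set A : Finset (Fin N × ℕ) := Finset.univ ×ˢ Finset.Ioc 0 t with hA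
    set w : ℕ → ℝ := fun s => (1 - u s) * Q u s t with hwdef
    set Y : Fin N × ℕ → Ω → ℝ := fun p ω => w p.2 * η p.1 p.2 ω with hYdef
    set Z : Ω → ℝ := fun ω => ∑ p ∈ A, Y p ω with hZdef
    set a : ℝ := Q u 0 t * ∑ i, c i with hadef
    have hS : ∀ ω, ∑ i, e i t ω = a + Z ω := by
      intro ω
      rw [Finset.sum_congr rfl (fun i _ => hclosed t i ω), Finset.sum_add_distrib,
        ← Finset.mul_sum]
      congr 1
      show (∑ i, ∑ s ∈ Finset.Ioc 0 t, w s * η i s ω)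
          = ∑ p ∈ Finset.univ ×ˢ Finset.Ioc 0 t, w p.2 * η p.1 p.2 ω
      exact (Finset.sum_product (s := Finset.univ) (t := Finset.Ioc 0 t)
        (f := fun p : Fin N × ℕ => w p.2 * η p.1 p.2 ω)).symm
    have hYm : ∀ p ∈ A, MemLp (Y p) 2 μ := fun p _ => (hηint p.1 p.2).const_mul _
    have hZm : MemLp Z 2 μ := by
      have h := memLp_finset_sum' A hYm
      have heq : (∑ p ∈ A, Y p) = Z := by ext ω; simp [hZdef]
      rwa [heq] at h
    have hZint : Integrable Z μ := hZm.integrable one_le_two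
    have hZsq : Integrable (fun ω => Z ω ^ 2) μ := hZm.integrable_sq
    have hZmean : ∫ ω, Z ω ∂μ = 0 := by
      have h1 : ∫ ω, (∑ p ∈ A, Y p ω) ∂μ = ∑ p ∈ A, ∫ ω, Y p ω ∂μ :=
        integral_finset_sum A
          (fun p _ => ((hηint p.1 p.2).integrable one_le_two).const_mul _)
      calc ∫ ω, Z ω ∂μ = ∑ p ∈ A, ∫ ω, Y p ω ∂μ := h1
        _ = 0 := by
            refine Finset.sum_eq_zero fun p _ => ?_
            have h : ∫ ω, w p.2 * η p.1 p.2 ω ∂μ = w p.2 * ∫ ω, η p.1 p.2 ω ∂μ :=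
              integral_const_mul _ _
            calc ∫ ω, Y p ω ∂μ = w p.2 * ∫ ω, η p.1 p.2 ω ∂μ := h
              _ = 0 := by rw [hmean]; ring
    have hvarZ : variance Z μ ≤ Λ * ∑ s ∈ Finset.Ioc 0 t, w s ^ 2 := by
      have hps : variance Z μ = ∑ p ∈ A, variance (Y p) μ := by
        have heq : (∑ p ∈ A, Y p) = Z := by ext ω; simp [hZdef]
        have hvs := IndepFun.variance_sum (μ := μ) hYm ?_
        · rwa [heq] at hvs
        · intro p hp q hq hpq
          exact (hindep.indepFun hpq).comp (measurable_const_mul (w p.2))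
            (measurable_const_mul (w q.2))
      rw [hps]
      calc ∑ p ∈ A, variance (Y p) μ
          = ∑ p ∈ A, w p.2 ^ 2 * variance (η p.1 p.2) μ :=
            Finset.sum_congr rfl fun p _ => variance_const_mul _ _ _
        _ ≤ ∑ p ∈ A, w p.2 ^ 2 * lam p.1 ^ 2 := by
            refine Finset.sum_le_sum fun p _ => ?_
            exact mul_le_mul_of_nonneg_left (hvar p.1 p.2) (sq_nonneg _)
        _ = Λ * ∑ s ∈ Finset.Ioc 0 t, w s ^ 2 := by
            rw [hA, Finset.sum_product]
            rw [hΛ, Finset.sum_mul]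
            refine Finset.sum_congr rfl fun i _ => ?_
            rw [Finset.mul_sum]
            exact Finset.sum_congr rfl fun s _ => by ring
    have hint : ∫ ω, (∑ i, e i t ω) ^ 2 ∂μ = a ^ 2 + variance Z μ := by
      have hga : Integrable (fun ω => (2 * a) * Z ω) μ := hZint.const_mul _
      have hg : Integrable (fun ω => (2 * a) * Z ω + Z ω ^ 2) μ := hga.add hZsq
      have hv : variance Z μ = ∫ ω, Z ω ^ 2 ∂μ := by
        rw [variance_eq_sub hZm]
        simp only [Pi.pow_apply]
        rw [hZmean]
        ring
      have h0 : ∀ ω, (∑ i, e i t ω) ^ 2 = a ^ 2 + ((2 * a) * Z ω + Z ω ^ 2) := fun ω => by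
        rw [hS ω]; ring
      calc ∫ ω, (∑ i, e i t ω) ^ 2 ∂μ
          = ∫ ω, (a ^ 2 + ((2 * a) * Z ω + Z ω ^ 2)) ∂μ := by simp only [h0]
        _ = (∫ _ω, (a ^ 2 : ℝ) ∂μ) + ∫ ω, ((2 * a) * Z ω + Z ω ^ 2) ∂μ :=
            integral_add (integrable_const _) hg
        _ = a ^ 2 + ((∫ ω, (2 * a) * Z ω ∂μ) + ∫ ω, Z ω ^ 2 ∂μ) := by
            rw [integral_add hga hZsq, integral_const]
            simp
        _ = a ^ 2 + variance Z μ := by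
            rw [integral_const_mul, hZmean, hv]
            ring
    rw [hint]
    have ha : a = Q u 0 t * ∑ i, c i := hadef
    nlinarith [hvarZ]
  -- upper bound tends to zero
  have hub : Tendsto (fun t => (Q u 0 t * ∑ i, c i) ^ 2
      + Λ * ∑ s ∈ Finset.Ioc 0 t, ((1 - u s) * Q u s t) ^ 2) atTop (nhds 0) := by
    have h1 := ((Q_tendsto hu01 hdiv 0).mul_const (∑ i, c i)).pow 2
    have h2 := (W_tendsto hu01 hu1 hdiv).const_mul Λ
    have h := h1.add h2
    simpa using h
  exact squeeze_zero (fun t => integral_nonneg fun ω => sq_nonneg _) key hub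
end

section
/- Fix u ∈ (0,1) and N agents, and for each agent i an integer K_i ≥ 1. For each i and each n ∈ {1,…,K_i} let ε^{(n)}_{i,t} (t ≥ 1) be real sequences with |ε^{(n)}_{i,t}| ≤ θ^{(n)}_i for all t, where θ^{(n)}_i ≥ 0. Let Δ_{i,0} = 0 and Δ_{i,t} = u·Δ_{i,t−1} + (1−u)·Σ_{n=1}^{K_i} ε^{(n)}_{i,t} for t ≥ 1. Let Θ = Σ_{i=1}^N Σ_{n=1}^{K_i} θ^{(n)}_i > 0 and let 0 < β < Θ. Then for every natural number t with t ≤ log(1 − β/Θ)/log(u), one has |Σ_{i=1}^N Δ_{i,t}| ≤ β. -/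
/-- Corollary 3: any t ≤ log(1 - β/Θ)/log(u) guarantees |Δ̄_t| ≤ β. -/
theorem mmemq_stopping_condition
    (N : ℕ) (u : ℝ) (hu : u ∈ Set.Ioo (0 : ℝ) 1)
    (K : Fin N → ℕ) (hK : ∀ i, 1 ≤ K i)
    (ε : (i : Fin N) → Fin (K i) → ℕ → ℝ)
    (θ : (i : Fin N) → Fin (K i) → ℝ)
    (hθ : ∀ i n, 0 ≤ θ i n)
    (hε : ∀ i n t, 1 ≤ t → |ε i n t| ≤ θ i n)
    (Δ : Fin N → ℕ → ℝ)
    (hΔ0 : ∀ i, Δ i 0 = 0)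
    (hrec : ∀ i t, Δ i (t + 1) = u * Δ i t + (1 - u) * ∑ n, ε i n (t + 1))
    (Θ : ℝ) (hΘdef : Θ = ∑ i, ∑ n, θ i n) (hΘpos : 0 < Θ)
    (β : ℝ) (hβ : 0 < β) (hβΘ : β < Θ)
    (t : ℕ) (ht : (t : ℝ) ≤ Real.log (1 - β / Θ) / Real.log u) :
    |∑ i, Δ i t| ≤ β := by
  obtain ⟨hu0, hu1⟩ := hu
  -- Step 1: per-agent bound |Δ i t| ≤ (1 - u^t) * ∑ n, θ i n
  have key : ∀ i t, |Δ i t| ≤ (1 - u ^ t) * ∑ n, θ i n := by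
    intro i t
    induction t with
    | zero => simp [hΔ0 i]
    | succ t ih =>
      have hSnn : (0 : ℝ) ≤ ∑ n, θ i n := Finset.sum_nonneg fun n _ => hθ i n
      have hsum : |∑ n, ε i n (t + 1)| ≤ ∑ n, θ i n := by
        calc |∑ n, ε i n (t + 1)| ≤ ∑ n, |ε i n (t + 1)| := Finset.abs_sum_le_sum_abs _ _
          _ ≤ ∑ n, θ i n := Finset.sum_le_sum fun n _ => hε i n (t + 1) (by omega)
      rw [hrec i t]
      calc |u * Δ i t + (1 - u) * ∑ n, ε i n (t + 1)|
          ≤ |u * Δ i t| + |(1 - u) * ∑ n, ε i n (t + 1)| := abs_add_le _ _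
        _ = u * |Δ i t| + (1 - u) * |∑ n, ε i n (t + 1)| := by
            rw [abs_mul, abs_mul, abs_of_pos hu0, abs_of_pos (by linarith : (0:ℝ) < 1 - u)]
        _ ≤ u * ((1 - u ^ t) * ∑ n, θ i n) + (1 - u) * ∑ n, θ i n := by
            have h1u : (0:ℝ) ≤ 1 - u := by linarith
            gcongr
        _ = (1 - u ^ (t + 1)) * ∑ n, θ i n := by ring
  -- Step 2: sum over agents
  have hsum : |∑ i, Δ i t| ≤ (1 - u ^ t) * Θ := by
    calc |∑ i, Δ i t| ≤ ∑ i, |Δ i t| := Finset.abs_sum_le_sum_abs _ _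
      _ ≤ ∑ i, (1 - u ^ t) * ∑ n, θ i n := Finset.sum_le_sum fun i _ => key i t
      _ = (1 - u ^ t) * Θ := by rw [hΘdef, Finset.mul_sum]
  -- Step 3: from ht deduce 1 - β/Θ ≤ u^t
  have h1 : (0 : ℝ) < 1 - β / Θ := by
    have : β / Θ < 1 := (div_lt_one hΘpos).mpr hβΘ
    linarith
  have hlogu : Real.log u < 0 := Real.log_neg hu0 hu1
  have h2 : Real.log (1 - β / Θ) ≤ (t : ℝ) * Real.log u := by
    have := mul_le_mul_of_nonpos_right ht (le_of_lt hlogu)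
    rwa [div_mul_cancel₀ _ (ne_of_lt hlogu)] at this
  have h3 : 1 - β / Θ ≤ u ^ t := by
    have := Real.exp_le_exp.mpr h2
    rwa [Real.exp_log h1, ← Real.log_pow, Real.exp_log (pow_pos hu0 t)] at this
  have h4 : (1 - u ^ t) * Θ ≤ β := by
    have : 1 - u ^ t ≤ β / Θ := by linarith
    calc (1 - u ^ t) * Θ ≤ (β / Θ) * Θ := by
          exact mul_le_mul_of_nonneg_right this (le_of_lt hΘpos)
      _ = β := div_mul_cancel₀ _ (ne_of_gt hΘpos)
  linarith [hsum]
end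

section
/- Let σ_u > σ_c > 0 and p ∈ (0,1) with p·σ_u > (1−p)·σ_c. Let Q(z) = (1/√(2π))·∫_z^∞ exp(−t²/2) dt denote the standard normal tail function, and define g : (0,∞) → ℝ by g(x) = p·Q(x/σ_c) + (1−p)·(1 − Q(x/σ_u)). Let Δ_I = sqrt( 2·ln(p·σ_u/((1−p)·σ_c)) · (1/σ_c² − 1/σ_u²)^{−1} ). Then Δ_I ∈ (0,∞) and Δ_I is the unique global minimizer of g on (0,∞): for every x ∈ (0,∞) with x ≠ Δ_I, g(Δ_I) < g(x). -/
/-- The standard normal (Gaussian) tail function Q(z) = (1/√(2π))·∫_z^∞ e^{-t²/2} dt. -/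
noncomputable def gaussQ (z : ℝ) : ℝ :=
  (1 / Real.sqrt (2 * Real.pi)) * ∫ t in Set.Ioi z, Real.exp (-t ^ 2 / 2)

open MeasureTheory Set

lemma gauss_integrable : Integrable (fun t : ℝ => Real.exp (-t ^ 2 / 2)) := by
  have := integrable_exp_neg_mul_sq (b := (1/2 : ℝ)) (by norm_num)
  convert this using 2 with t
  ring_nf

lemma hasDerivAt_gaussQ (z : ℝ) :
    HasDerivAt gaussQ (-(1 / Real.sqrt (2 * Real.pi) * Real.exp (-z ^ 2 / 2))) z := by
  set f : ℝ → ℝ := fun t : ℝ => Real.exp (-t ^ 2 / 2) with hf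
  have hcont : Continuous f := by fun_prop
  have hint : Integrable f := gauss_integrable
  have hrep : gaussQ = fun w : ℝ => (1 / Real.sqrt (2 * Real.pi)) * ((∫ t, f t)
      - (∫ t in Set.Iic (0:ℝ), f t) - ∫ t in (0:ℝ)..w, f t) := by
    funext w
    have h1 : (∫ t in Set.Iic w, f t) + (∫ t in Set.Ioi w, f t) = ∫ t, f t :=
      intervalIntegral.integral_Iic_add_Ioi hint.integrableOn hint.integrableOn
    have h2 : (∫ t in Set.Iic w, f t) - (∫ t in Set.Iic (0:ℝ), f t) = ∫ t in (0:ℝ)..w, f t :=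
      intervalIntegral.integral_Iic_sub_Iic hint.integrableOn hint.integrableOn
    unfold gaussQ
    rw [← h2, ← h1]
    ring
  have hd : HasDerivAt (fun u => ∫ t in (0:ℝ)..u, f t) (f z) z :=
    intervalIntegral.integral_hasDerivAt_right hint.intervalIntegrable
      (hcont.stronglyMeasurable.stronglyMeasurableAtFilter) hcont.continuousAt
  have hD : HasDerivAt (fun w : ℝ => (1 / Real.sqrt (2 * Real.pi)) * ((∫ t, f t)
      - (∫ t in Set.Iic (0:ℝ), f t) - ∫ t in (0:ℝ)..w, f t))
      ((1 / Real.sqrt (2 * Real.pi)) * (0 - f z)) z :=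
    ((hasDerivAt_const z _).sub hd).const_mul _
  rw [hrep]
  convert hD using 1
  ring

/-- Δ_I uniquely minimizes the misdetection lower bound
g(x) = p·Q(x/σ_c) + (1-p)·(1 - Q(x/σ_u)) on (0,∞). -/
theorem deltaI_unique_minimizer
    (σc σu p ΔI : ℝ)
    (hσc : 0 < σc) (hσcu : σc < σu)
    (hp : p ∈ Set.Ioo (0 : ℝ) 1)
    (h : (1 - p) * σc < p * σu)
    (hΔI : ΔI = Real.sqrt (2 * Real.log (p * σu / ((1 - p) * σc))
      * (1 / σc ^ 2 - 1 / σu ^ 2)⁻¹)) :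
    0 < ΔI ∧
      ∀ x : ℝ, 0 < x → x ≠ ΔI →
        p * gaussQ (ΔI / σc) + (1 - p) * (1 - gaussQ (ΔI / σu))
          < p * gaussQ (x / σc) + (1 - p) * (1 - gaussQ (x / σu)) := by
  obtain ⟨hp0, hp1⟩ := hp
  have hσu : 0 < σu := hσc.trans hσcu
  have hq0 : 0 < 1 - p := by linarith
  have hc : 0 < 1 / Real.sqrt (2 * Real.pi) := by positivity
  set c : ℝ := 1 / Real.sqrt (2 * Real.pi) with hcdef
  -- the positive constants
  have hfrac : 1 < p * σu / ((1 - p) * σc) := by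
    rw [lt_div_iff₀ (by positivity)]; linarith
  set L : ℝ := Real.log (p * σu / ((1 - p) * σc)) with hL
  have hLpos : 0 < L := Real.log_pos hfrac
  set k : ℝ := 1 / σc ^ 2 - 1 / σu ^ 2 with hk
  have hkpos : 0 < k := by
    have : 1 / σu ^ 2 < 1 / σc ^ 2 := by
      apply one_div_lt_one_div_of_lt (by positivity)
      exact pow_lt_pow_left₀ hσcu hσc.le two_ne_zero
    simpa [hk] using sub_pos.mpr this
  have hΔIpos : 0 < ΔI := by
    rw [hΔI]; exact Real.sqrt_pos.mpr (by positivity)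
  have hΔIsq : ΔI ^ 2 = 2 * L * k⁻¹ := by
    rw [hΔI, Real.sq_sqrt (by positivity)]
  -- the objective function and its derivative
  set G : ℝ → ℝ := fun x => p * gaussQ (x / σc) + (1 - p) * (1 - gaussQ (x / σu)) with hG
  set D : ℝ → ℝ := fun x => c * ((1 - p) / σu * Real.exp (-(x / σu) ^ 2 / 2)
      - p / σc * Real.exp (-(x / σc) ^ 2 / 2)) with hD
  have hderiv : ∀ x : ℝ, HasDerivAt G (D x) x := by
    intro x
    have h1 : HasDerivAt (fun x : ℝ => x / σc) (1 / σc) x := by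
      simpa using (hasDerivAt_id x).div_const σc
    have h2 : HasDerivAt (fun x : ℝ => x / σu) (1 / σu) x := by
      simpa using (hasDerivAt_id x).div_const σu
    have hc1 : HasDerivAt (fun x : ℝ => gaussQ (x / σc))
        (-(c * Real.exp (-(x / σc) ^ 2 / 2)) * (1 / σc)) x := by
      have := (hasDerivAt_gaussQ (x / σc)).comp x h1; exact this
    have hc2 : HasDerivAt (fun x : ℝ => gaussQ (x / σu))
        (-(c * Real.exp (-(x / σu) ^ 2 / 2)) * (1 / σu)) x := by
      have := (hasDerivAt_gaussQ (x / σu)).comp x h2; exact this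
    have := ((hc1.const_mul p).add (((hasDerivAt_const x (1:ℝ)).sub hc2).const_mul (1 - p)))
    refine this.congr_deriv ?_
    simp only [hD]
    ring
  have hderivG : deriv G = D := funext fun x => (hderiv x).deriv
  have hcont : Continuous G :=
    continuous_iff_continuousAt.mpr fun x => (hderiv x).continuousAt
  -- sign of the derivative
  have hsign : ∀ x : ℝ, 0 < x → ((x < ΔI → D x < 0) ∧ (ΔI < x → 0 < D x)) := by
    intro x hx
    -- rewrite the two exponential terms via exp of logs
    have e1 : p / σc * Real.exp (-(x / σc) ^ 2 / 2)
        = Real.exp (Real.log (p / σc) + -(x / σc) ^ 2 / 2) := by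
      rw [Real.exp_add, Real.exp_log (by positivity)]
    have e2 : (1 - p) / σu * Real.exp (-(x / σu) ^ 2 / 2)
        = Real.exp (Real.log ((1 - p) / σu) + -(x / σu) ^ 2 / 2) := by
      rw [Real.exp_add, Real.exp_log (by positivity)]
    have hlogdiff : Real.log (p / σc) - Real.log ((1 - p) / σu) = L := by
      rw [hL, Real.log_div (by positivity) (by positivity),
        Real.log_div (by positivity) (by positivity),
        Real.log_div (by positivity) (by positivity),
        Real.log_mul (by positivity) (by positivity),
        Real.log_mul (by positivity) (by positivity)]
      ring
    have hxc : -(x / σc) ^ 2 / 2 = -(x ^ 2 / σc ^ 2) / 2 := by ring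
    have hxu : -(x / σu) ^ 2 / 2 = -(x ^ 2 / σu ^ 2) / 2 := by ring
    constructor
    · intro hlt
      have hx2 : x ^ 2 < 2 * L * k⁻¹ := by
        rw [← hΔIsq]; exact pow_lt_pow_left₀ hlt hx.le two_ne_zero
      have hexp : Real.log ((1 - p) / σu) + -(x / σu) ^ 2 / 2
          < Real.log (p / σc) + -(x / σc) ^ 2 / 2 := by
        have : x ^ 2 * k < 2 * L := by
          calc x ^ 2 * k < 2 * L * k⁻¹ * k := by
                exact mul_lt_mul_of_pos_right hx2 hkpos
            _ = 2 * L := by field_simp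
        rw [hxc, hxu]
        rw [hk] at this
        have hd2 : x ^ 2 / σc ^ 2 - x ^ 2 / σu ^ 2 < 2 * L := by
          calc x ^ 2 / σc ^ 2 - x ^ 2 / σu ^ 2 = x ^ 2 * (1 / σc ^ 2 - 1 / σu ^ 2) := by ring
            _ < 2 * L := this
        linarith [hlogdiff]
      have := Real.exp_lt_exp.mpr hexp
      rw [← e1, ← e2] at this
      have : (1 - p) / σu * Real.exp (-(x / σu) ^ 2 / 2)
          - p / σc * Real.exp (-(x / σc) ^ 2 / 2) < 0 := by linarith
      exact mul_neg_of_pos_of_neg hc this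
    · intro hlt
      have hx2 : 2 * L * k⁻¹ < x ^ 2 := by
        rw [← hΔIsq]; exact pow_lt_pow_left₀ hlt hΔIpos.le two_ne_zero
      have hexp : Real.log (p / σc) + -(x / σc) ^ 2 / 2
          < Real.log ((1 - p) / σu) + -(x / σu) ^ 2 / 2 := by
        have : 2 * L < x ^ 2 * k := by
          calc 2 * L = 2 * L * k⁻¹ * k := by field_simp
            _ < x ^ 2 * k := mul_lt_mul_of_pos_right hx2 hkpos
        rw [hxc, hxu]
        rw [hk] at this
        have hd2 : 2 * L < x ^ 2 / σc ^ 2 - x ^ 2 / σu ^ 2 := by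
          calc 2 * L < x ^ 2 * (1 / σc ^ 2 - 1 / σu ^ 2) := this
            _ = x ^ 2 / σc ^ 2 - x ^ 2 / σu ^ 2 := by ring
        linarith [hlogdiff]
      have := Real.exp_lt_exp.mpr hexp
      rw [← e1, ← e2] at this
      have : 0 < (1 - p) / σu * Real.exp (-(x / σu) ^ 2 / 2)
          - p / σc * Real.exp (-(x / σc) ^ 2 / 2) := by linarith
      exact mul_pos hc this
  -- monotonicity
  have hanti : StrictAntiOn G (Set.Icc 0 ΔI) := by
    apply strictAntiOn_of_deriv_neg (convex_Icc 0 ΔI) hcont.continuousOn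
    intro x hx
    rw [interior_Icc] at hx
    rw [hderivG]
    exact (hsign x hx.1).1 hx.2
  have hmono : StrictMonoOn G (Set.Ici ΔI) := by
    apply strictMonoOn_of_deriv_pos (convex_Ici ΔI) hcont.continuousOn
    intro x hx
    rw [interior_Ici] at hx
    rw [hderivG]
    exact (hsign x (hΔIpos.trans hx)).2 hx
  refine ⟨hΔIpos, fun x hx hne => ?_⟩
  rcases lt_or_gt_of_ne hne with hlt | hgt
  · exact hanti ⟨hx.le, hlt.le⟩ ⟨hΔIpos.le, le_rfl⟩ hlt
  · exact hmono Set.self_mem_Ici (Set.mem_Ici.mpr hgt.le) hgt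
end
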